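/- Let R be a symmetric linear endomorphism of n-dimensional Minkowski space (i.e., R^a_b with R_{ab} = R_{ba} after lowering an index with the Lorentzian metric g). Then R has a complex eigenvalue of algebraic multiplicity at least 2 if and only if R possesses a (possibly complex) null eigenvector, i.e., a nonzero vector v in the complexification with g(v,v) = 0 and Rv = λv for some λ ∈ ℂ. -/

import Mathlib

open scoped Matrix

/-- The Minkowski metric matrix of signature (-,+,...,+). -/
noncomputable def minkMetric (n : ℕ) : Matrix (Fin n) (Fin n) ℝ :=
  Matrix.diagonal (fun i => if (i : ℕ) = 0 then -1 else 1)

/-- The complexified Minkowski metric matrix. -/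
noncomputable def minkMetricC (n : ℕ) : Matrix (Fin n) (Fin n) ℂ :=
  (minkMetric n).map Complex.ofReal

open Polynomial Module LinearMap

section Aux

variable {K : Type*} [Field K] {M : Type*} [AddCommGroup M] [Module K M]

lemma aux_matrix_charpoly_add_smul_one {m : Type*} [Fintype m] [DecidableEq m]
    (A : Matrix m m K) (μ : K) :
    (A + μ • 1).charpoly = A.charpoly.comp (X - C μ) := by
  let σ : K[X] →+* K[X] := eval₂RingHom Polynomial.C (X - C μ)
  have h1 : A.charpoly.comp (X - C μ) = σ A.charpoly := rfl
  rw [h1, Matrix.charpoly, Matrix.charpoly, RingHom.map_det]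
  congr 1
  ext i j
  by_cases h : i = j
  · subst h
    simp [σ, Matrix.charmatrix_apply, Matrix.diagonal_apply_eq, Matrix.one_apply, sub_sub]
    ring_nf
  · simp [σ, Matrix.charmatrix_apply, Matrix.diagonal_apply_ne _ h, Matrix.one_apply_ne h]

lemma aux_end_charpoly_add_smul_one [FiniteDimensional K M] (φ : Module.End K M) (μ : K) :
    (φ + μ • 1).charpoly = φ.charpoly.comp (X - C μ) := by
  classical
  let b := finBasis K M
  rw [← LinearMap.charpoly_toMatrix φ b, ← LinearMap.charpoly_toMatrix (φ + μ • 1) b,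
    ← aux_matrix_charpoly_add_smul_one]
  congr 1
  rw [map_add, map_smul, show (1 : Module.End K M) = LinearMap.id from rfl,
    LinearMap.toMatrix_id]

lemma aux_charpoly_mul_of_isCompl [FiniteDimensional K M] (φ : Module.End K M)
    {E W : Submodule K M} (h : IsCompl E W)
    (hE : ∀ x ∈ E, φ x ∈ E) (hW : ∀ x ∈ W, φ x ∈ W) :
    φ.charpoly = (φ.restrict hE).charpoly * (φ.restrict hW).charpoly := by
  let e := Submodule.prodEquivOfIsCompl E W h
  have key : e.conj ((φ.restrict hE).prodMap (φ.restrict hW)) = φ := by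
    apply LinearMap.ext
    intro m
    conv_rhs => rw [← e.apply_symm_apply m]
    rw [LinearEquiv.conj_apply]
    simp only [LinearMap.comp_apply, LinearEquiv.coe_coe]
    generalize e.symm m = p
    obtain ⟨x, y⟩ := p
    show e (_, _) = φ (e (x, y))
    simp [e, Submodule.coe_prodEquivOfIsCompl', LinearMap.restrict_apply, map_add]
  have h2 := LinearEquiv.charpoly_conj e ((φ.restrict hE).prodMap (φ.restrict hW))
  rw [key] at h2
  rw [h2, LinearMap.charpoly_prodMap]

lemma aux_exists_eigenvector_of_isRoot [FiniteDimensional K M] (φ : Module.End K M) (μ : K)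
    (h : φ.charpoly.IsRoot μ) : ∃ v : M, v ≠ 0 ∧ φ v = μ • v := by
  classical
  let b := finBasis K M
  let A := LinearMap.toMatrix b b φ
  have hch : φ.charpoly = A.charpoly := (LinearMap.charpoly_toMatrix φ b).symm
  have heval : A.charpoly.eval μ = (Matrix.scalar _ μ - A).det := by
    rw [Matrix.charpoly, _root_.eval_det, Matrix.matPolyEquiv_charmatrix]
    simp
  have hdet : (Matrix.scalar _ μ - A).det = 0 := by
    rw [← heval, ← hch]
    exact h
  obtain ⟨v, hv0, hv⟩ := (Matrix.exists_mulVec_eq_zero_iff).2 hdet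
  set w := b.equivFun.symm v with hw
  have hrepr : ⇑(b.repr w) = v := by
    rw [show ⇑(b.repr w) = b.equivFun w from (b.equivFun_apply w).symm,
      LinearEquiv.apply_symm_apply]
  have hw0 : w ≠ 0 := by
    intro h0
    apply hv0
    rw [← hrepr, h0, map_zero]
    rfl
  have h2 : A.mulVec v = μ • v := by
    have h3 := hv
    rw [Matrix.sub_mulVec, sub_eq_zero] at h3
    have hscal : (Matrix.scalar _ μ).mulVec v = μ • v := by
      ext i
      simp [Matrix.scalar, Matrix.mulVec_diagonal]
    rw [← h3, hscal]
  have h4 : A.mulVec v = ⇑(b.repr (φ w)) := by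
    rw [← hrepr]
    exact LinearMap.toMatrix_mulVec_repr b b φ w
  refine ⟨w, hw0, ?_⟩
  apply b.repr.injective
  apply DFunLike.coe_injective
  show ⇑(b.repr (φ w)) = ⇑(b.repr (μ • w))
  rw [← h4, h2, map_smul, Finsupp.coe_smul, hrepr]

lemma aux_rootMultiplicity_charpoly [FiniteDimensional K M] (φ : Module.End K M) (μ : K) :
    φ.charpoly.rootMultiplicity μ = finrank K (φ.maxGenEigenspace μ) := by
  classical
  set f : Module.End K M := φ - μ • 1 with hf
  set E : Submodule K M := ⨆ k : ℕ, LinearMap.ker (f ^ k) with hEdef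
  set W : Submodule K M := ⨅ k : ℕ, LinearMap.range (f ^ k) with hWdef
  have hcompl : IsCompl E W := f.isCompl_iSup_ker_pow_iInf_range_pow
  have hdir : Directed (· ≤ ·) fun k : ℕ => LinearMap.ker (f ^ k) :=
    Monotone.directed_le fun a b h => f.iterateKer.monotone h
  have hmemE : ∀ x : M, x ∈ E ↔ ∃ k : ℕ, (f ^ k) x = 0 := by
    intro x
    rw [hEdef, Submodule.mem_iSup_of_directed _ hdir]
    simp [LinearMap.mem_ker]
  have hEeq : φ.maxGenEigenspace μ = E := by
    ext x
    rw [Module.End.mem_maxGenEigenspace, hmemE]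
  -- commutation
  have hcomm : ∀ k : ℕ, φ * f ^ k = f ^ k * φ := by
    intro k
    have : Commute φ f := by
      rw [hf]
      exact (Commute.refl φ).sub_right (Commute.smul_right (Commute.one_right φ) μ)
    exact (this.pow_right k).eq
  have hE : ∀ x ∈ E, φ x ∈ E := by
    intro x hx
    rw [hmemE] at hx ⊢
    obtain ⟨k, hk⟩ := hx
    refine ⟨k, ?_⟩
    have := congrArg (fun g : Module.End K M => g x) (hcomm k)
    simp only [Module.End.mul_apply] at this
    rw [← this, hk, map_zero]
  have hW : ∀ x ∈ W, φ x ∈ W := by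
    intro x hx
    simp only [hWdef, Submodule.mem_iInf, LinearMap.mem_range] at hx ⊢
    intro k
    obtain ⟨z, hz⟩ := hx k
    refine ⟨φ z, ?_⟩
    have := congrArg (fun g : Module.End K M => g z) (hcomm k)
    simp only [Module.End.mul_apply] at this
    rw [← this, hz]
  -- charpoly of restriction to E
  have hfE : ∀ x ∈ E, f x ∈ E := by
    intro x hx
    rw [hmemE] at hx ⊢
    obtain ⟨k, hk⟩ := hx
    refine ⟨k, ?_⟩
    have hfx : (f ^ k) (f x) = f ((f ^ k) x) := by
      rw [← Module.End.mul_apply, ← Module.End.mul_apply, ← pow_succ, ← pow_succ']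
    rw [hfx, hk, map_zero]
  have hrestr_sub : φ.restrict hE - μ • 1 = f.restrict hfE := by
    ext x
    simp [LinearMap.restrict_apply, hf]
  have hnil : (f.restrict hfE).charpoly = X ^ finrank K E := by
    rw [LinearMap.charpoly_eq_X_pow_iff]
    intro x
    obtain ⟨k, hk⟩ := (hmemE x.1).1 x.2
    refine ⟨k, ?_⟩
    rw [Module.End.pow_restrict]
    apply Subtype.ext
    rw [LinearMap.restrict_apply]
    exact hk
  have hcharE : (φ.restrict hE).charpoly = (X - C μ) ^ finrank K E := by
    have : φ.restrict hE = f.restrict hfE + μ • 1 := by rw [← hrestr_sub]; exact (sub_add_cancel _ _).symm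
    rw [this, aux_end_charpoly_add_smul_one, hnil, X_pow_comp]
  -- μ is not a root on W
  have hnotroot : ¬ (φ.restrict hW).charpoly.IsRoot μ := by
    intro hroot
    obtain ⟨v, hv0, hv⟩ := aux_exists_eigenvector_of_isRoot _ _ hroot
    have h1 : f v.1 = 0 := by
      have := congrArg (Subtype.val) hv
      simp only [LinearMap.restrict_apply] at this
      simp [hf, this]
    have hvE : (v : M) ∈ E := (hmemE _).2 ⟨1, by simpa using h1⟩
    have : (v : M) = 0 := by
      have := hcompl.disjoint
      exact (Submodule.disjoint_def.1 this) v.1 hvE v.2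
    exact hv0 (Subtype.ext this)
  rw [aux_charpoly_mul_of_isCompl φ hcompl hE hW, hEeq,
    Polynomial.rootMultiplicity_mul (by
      apply mul_ne_zero <;> exact (LinearMap.charpoly_monic _).ne_zero),
    hcharE, Polynomial.rootMultiplicity_X_sub_C_pow,
    Polynomial.rootMultiplicity_eq_zero hnotroot, add_zero]

lemma aux_mulVec_dot {n : ℕ} (A : Matrix (Fin n) (Fin n) ℂ) (u w : Fin n → ℂ) :
    (A *ᵥ u) ⬝ᵥ w = u ⬝ᵥ (Aᵀ *ᵥ w) := by
  rw [dotProduct_comm, Matrix.dotProduct_mulVec, dotProduct_comm,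
    Matrix.mulVec_transpose]


end Aux

/-- a g-symmetric endomorphism `R` of Minkowski space has a complex
eigenvalue of algebraic multiplicity at least 2 if and only if its
complexification possesses a null eigenvector. -/
theorem multiple_eigenvalue_iff_null_eigenvector {n : ℕ}
    (R : Matrix (Fin n) (Fin n) ℝ)
    (hsym : (minkMetric n * R)ᵀ = minkMetric n * R) :
    (∃ lam : ℂ,
        2 ≤ Polynomial.rootMultiplicity lam
              (Matrix.charpoly (R.map Complex.ofReal)))
    ↔ (∃ (lam : ℂ) (v : Fin n → ℂ), v ≠ 0 ∧
        v ⬝ᵥ (minkMetricC n).mulVec v = 0 ∧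
        (R.map Complex.ofReal).mulVec v = lam • v) := by
  classical
  set A : Matrix (Fin n) (Fin n) ℂ := R.map Complex.ofReal with hA
  set G : Matrix (Fin n) (Fin n) ℂ := minkMetricC n with hG
  set φ : Module.End ℂ (Fin n → ℂ) := A.mulVecLin with hφdef
  have hφ : ∀ u, φ u = A *ᵥ u := fun u => rfl
  -- G is diagonal
  have hGdiag : G = Matrix.diagonal (fun i : Fin n => if (i : ℕ) = 0 then (-1 : ℂ) else 1) := by
    rw [hG, minkMetricC, minkMetric]
    ext i j
    by_cases hij : i = j
    · subst hij
      by_cases h : (i : ℕ) = 0 <;>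
        simp [Matrix.map_apply, Matrix.diagonal_apply_eq, h]
    · simp [Matrix.map_apply, Matrix.diagonal_apply_ne _ hij]
  have hGT : Gᵀ = G := by rw [hGdiag, Matrix.diagonal_transpose]
  -- symmetry hypothesis, complexified
  have hGA : Aᵀ * G = G * A := by
    have h1 : (G * A)ᵀ = G * A := by
      have := congrArg (fun M : Matrix (Fin n) (Fin n) ℝ =>
        M.map (Complex.ofRealHom : ℝ →+* ℂ)) hsym
      have hc : (⇑(Complex.ofRealHom : ℝ →+* ℂ) : ℝ → ℂ) = Complex.ofReal := rfl
      simp only [Matrix.transpose_map, Matrix.map_mul] at this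
      simpa [hA, hG, minkMetricC, Matrix.transpose_map, hc] using this
    calc Aᵀ * G = Aᵀ * Gᵀ := by rw [hGT]
      _ = (G * A)ᵀ := by rw [Matrix.transpose_mul]
      _ = G * A := h1
  -- self-adjointness
  have hadj : ∀ u w : Fin n → ℂ, (A *ᵥ u) ⬝ᵥ (G *ᵥ w) = u ⬝ᵥ (G *ᵥ (A *ᵥ w)) := by
    intro u w
    rw [aux_mulVec_dot, Matrix.mulVec_mulVec, hGA, ← Matrix.mulVec_mulVec]
  -- symmetry of the form
  have hBsymm : ∀ u w : Fin n → ℂ, u ⬝ᵥ (G *ᵥ w) = w ⬝ᵥ (G *ᵥ u) := by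
    intro u w
    rw [dotProduct_comm, aux_mulVec_dot, hGT]
  -- nondegeneracy
  have hnondeg : ∀ v : Fin n → ℂ, (∀ u, u ⬝ᵥ (G *ᵥ v) = 0) → v = 0 := by
    intro v h
    funext i
    have h1 := h (Pi.single i 1)
    rw [single_dotProduct, one_mul, hGdiag, Matrix.mulVec_diagonal] at h1
    rcases eq_or_ne (i : ℕ) 0 with h2 | h2 <;> simp [h2] at h1 <;> exact h1
  -- charpoly translation
  have hch : A.charpoly = φ.charpoly := by
    rw [hφdef, ← Matrix.toLin'_apply' A,
      ← LinearMap.charpoly_toMatrix (Matrix.toLin' A) (Pi.basisFun ℂ (Fin n)),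
      LinearMap.toMatrix_eq_toMatrix', LinearMap.toMatrix'_toLin']
  constructor
  · -- multiplicity ≥ 2 → null eigenvector
    rintro ⟨lam, hlam⟩
    set E : Submodule ℂ (Fin n → ℂ) := φ.maxGenEigenspace lam with hEdef
    have hd : 2 ≤ finrank ℂ E := by
      rw [hEdef, ← aux_rootMultiplicity_charpoly, ← hch]
      exact hlam
    by_cases hdiag : ∀ w ∈ E, φ w = lam • w
    · -- eigenspace of dim ≥ 2 : find isotropic vector
      have hEbot : E ≠ ⊥ := by
        intro h
        rw [h, finrank_bot] at hd
        omega
      obtain ⟨u, huE, hu0⟩ := Submodule.exists_mem_ne_zero_of_ne_bot hEbot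
      have hnotle : ¬ (E ≤ Submodule.span ℂ {u}) := by
        intro hle
        have h1 := Submodule.finrank_mono hle
        rw [finrank_span_singleton hu0] at h1
        omega
      obtain ⟨w, hwE, hwns⟩ := SetLike.not_le_iff_exists.1 hnotle
      by_cases ha : u ⬝ᵥ (G *ᵥ u) = 0
      · exact ⟨lam, u, hu0, ha, by rw [← hφ, hdiag u huE]⟩
      · set c : ℂ := (u ⬝ᵥ (G *ᵥ w)) / (u ⬝ᵥ (G *ᵥ u)) with hc
        set w' : Fin n → ℂ := w - c • u with hw'
        have hw'E : w' ∈ E := Submodule.sub_mem _ hwE (Submodule.smul_mem _ _ huE)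
        have hw'ns : w' ∉ Submodule.span ℂ {u} := by
          intro hmem
          apply hwns
          have : w = w' + c • u := by rw [hw']; ring
          rw [this]
          exact Submodule.add_mem _ hmem
            (Submodule.smul_mem _ _ (Submodule.mem_span_singleton_self u))
        have hw'0 : w' ≠ 0 := by
          intro h
          exact hw'ns (h ▸ Submodule.zero_mem _)
        have hBuw' : u ⬝ᵥ (G *ᵥ w') = 0 := by
          rw [hw', Matrix.mulVec_sub, Matrix.mulVec_smul, dotProduct_sub,
            dotProduct_smul, smul_eq_mul, hc, div_mul_cancel₀ _ ha, sub_self]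
        have hBw'u : w' ⬝ᵥ (G *ᵥ u) = 0 := by rw [hBsymm]; exact hBuw'
        by_cases hb : w' ⬝ᵥ (G *ᵥ w') = 0
        · exact ⟨lam, w', hw'0, hb, by rw [← hφ, hdiag w' hw'E]⟩
        · obtain ⟨t, ht⟩ := IsAlgClosed.exists_pow_nat_eq
            (-(u ⬝ᵥ (G *ᵥ u)) / (w' ⬝ᵥ (G *ᵥ w'))) (n := 2) (by norm_num)
          have ht0 : t ≠ 0 := by
            intro h
            rw [h] at ht
            have h1 : -(u ⬝ᵥ (G *ᵥ u)) / (w' ⬝ᵥ (G *ᵥ w')) = 0 := by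
              rw [← ht]; norm_num
            rcases _root_.div_eq_zero_iff.1 h1 with h2 | h2
            · exact ha (neg_eq_zero.1 h2)
            · exact hb h2
          refine ⟨lam, u + t • w', ?_, ?_, ?_⟩
          · intro h
            apply hw'ns
            have : w' = (-t⁻¹) • u := by
              have h2 : u = -(t • w') := eq_neg_of_add_eq_zero_left h
              rw [h2, smul_neg, neg_smul, neg_neg, smul_smul, inv_mul_cancel₀ ht0, one_smul]
            rw [this]
            exact Submodule.smul_mem _ _ (Submodule.mem_span_singleton_self u)
          · have hexp : (u + t • w') ⬝ᵥ (G *ᵥ (u + t • w'))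
                = u ⬝ᵥ (G *ᵥ u) + t * (u ⬝ᵥ (G *ᵥ w'))
                  + (t * (w' ⬝ᵥ (G *ᵥ u)) + t * (t * (w' ⬝ᵥ (G *ᵥ w')))) := by
              rw [Matrix.mulVec_add, Matrix.mulVec_smul, add_dotProduct,
                smul_dotProduct, dotProduct_add, dotProduct_add]
              simp only [dotProduct_smul, smul_eq_mul]
              ring
            rw [hexp, hBuw', hBw'u]
            have h3 : t * (t * (w' ⬝ᵥ (G *ᵥ w'))) = -(u ⬝ᵥ (G *ᵥ u)) := by
              rw [← mul_assoc, ← pow_two, ht, div_mul_cancel₀ _ hb]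
            rw [h3]
            ring
          · have hvE : u + t • w' ∈ E :=
              Submodule.add_mem _ huE (Submodule.smul_mem _ _ hw'E)
            rw [← hφ, hdiag _ hvE]
    · -- not all eigenvectors: Jordan chain
      push_neg at hdiag
      obtain ⟨w, hwE, hwne⟩ := hdiag
      set f : Module.End ℂ (Fin n → ℂ) := φ - lam • 1 with hfdef
      have hfw : f w ≠ 0 := by
        rw [hfdef]
        simp only [LinearMap.sub_apply, LinearMap.smul_apply, Module.End.one_apply]
        exact sub_ne_zero.2 hwne
      have hex : ∃ k : ℕ, (f ^ k) w = 0 := by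
        have := (Module.End.mem_maxGenEigenspace φ lam w).1 hwE
        simpa [hfdef] using this
      set k := Nat.find hex with hk
      have hkspec : (f ^ k) w = 0 := Nat.find_spec hex
      have hw0 : w ≠ 0 := fun h => hfw (by rw [h, map_zero])
      have hk2 : 2 ≤ k := by
        rw [hk, Nat.le_find_iff]
        intro m hm
        interval_cases m
        · simpa using hw0
        · simpa using hfw
      set v : Fin n → ℂ := (f ^ (k - 1)) w with hv
      have hv0 : v ≠ 0 := by
        rw [hv]
        exact Nat.find_min hex (by omega)
      have hfv : f v = 0 := by
        rw [hv, ← Module.End.mul_apply, ← pow_succ']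
        have : k - 1 + 1 = k := by omega
        rw [this]
        exact hkspec
      have heig : A *ᵥ v = lam • v := by
        have := hfv
        rw [hfdef] at this
        simp only [LinearMap.sub_apply, LinearMap.smul_apply, Module.End.one_apply] at this
        rw [← hφ, ← sub_eq_zero]
        exact this
      -- self-adjointness of f
      have hBf : ∀ x y : Fin n → ℂ, (f x) ⬝ᵥ (G *ᵥ y) = x ⬝ᵥ (G *ᵥ (f y)) := by
        intro x y
        rw [hfdef]
        simp only [LinearMap.sub_apply, LinearMap.smul_apply, Module.End.one_apply, hφ]
        rw [sub_dotProduct, smul_dotProduct, Matrix.mulVec_sub,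
          Matrix.mulVec_smul, dotProduct_sub, dotProduct_smul, hadj]
      have hBfpow : ∀ (m : ℕ) (x y : Fin n → ℂ),
          ((f ^ m) x) ⬝ᵥ (G *ᵥ y) = x ⬝ᵥ (G *ᵥ ((f ^ m) y)) := by
        intro m
        induction m with
        | zero => intro x y; simp
        | succ m ih =>
          intro x y
          have h1 : (f ^ (m + 1)) x = (f ^ m) (f x) := by
            rw [← Module.End.mul_apply, ← pow_succ]
          have h2 : (f ^ (m + 1)) y = f ((f ^ m) y) := by
            rw [← Module.End.mul_apply, ← pow_succ']
          rw [h1, h2, ih, hBf]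
      refine ⟨lam, v, hv0, ?_, heig⟩
      have hinner : (f ^ (k - 1)) ((f ^ (k - 1)) w) = 0 := by
        rw [← Module.End.mul_apply, ← pow_add]
        have : k - 1 + (k - 1) = (k - 2) + k := by omega
        rw [this, pow_add, Module.End.mul_apply, hkspec, map_zero]
      calc v ⬝ᵥ (G *ᵥ v) = w ⬝ᵥ (G *ᵥ ((f ^ (k - 1)) ((f ^ (k - 1)) w))) := by
            rw [hv, hBfpow]
        _ = 0 := by rw [hinner, Matrix.mulVec_zero, dotProduct_zero]
  · -- null eigenvector → multiplicity ≥ 2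
    rintro ⟨lam, v, hv0, hnull, heig⟩
    refine ⟨lam, ?_⟩
    rw [hch, aux_rootMultiplicity_charpoly]
    by_contra hlt
    push_neg at hlt
    set E : Submodule ℂ (Fin n → ℂ) := φ.maxGenEigenspace lam with hEdef
    have hφv : φ v = lam • v := heig
    have hvE : v ∈ E := by
      rw [hEdef, Module.End.mem_maxGenEigenspace]
      refine ⟨1, ?_⟩
      simp [hφv]
    have hspan : Submodule.span ℂ {v} = E := by
      apply Submodule.eq_of_le_of_finrank_le
      · rw [Submodule.span_le, Set.singleton_subset_iff]
        exact hvE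
      · rw [finrank_span_singleton hv0]
        omega
    -- the linear functional w ↦ v ⬝ᵥ G w
    set L : (Fin n → ℂ) →ₗ[ℂ] ℂ :=
      { toFun := fun w => v ⬝ᵥ (G *ᵥ w),
        map_add' := fun a b => by simp [Matrix.mulVec_add, dotProduct_add],
        map_smul' := fun c a => by
          simp [Matrix.mulVec_smul, dotProduct_smul] } with hL
    have hLapp : ∀ w, L w = v ⬝ᵥ (G *ᵥ w) := fun w => rfl
    have hker : ∀ μ : ℂ, φ.maxGenEigenspace μ ≤ LinearMap.ker L := by
      intro μ
      by_cases hμ : μ = lam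
      · subst hμ
        rw [← hEdef, ← hspan]
        rw [Submodule.span_le]
        intro x hx
        rw [Set.mem_singleton_iff] at hx
        subst hx
        rw [SetLike.mem_coe, LinearMap.mem_ker, hLapp]
        exact hnull
      · intro x hx
        rw [Module.End.mem_maxGenEigenspace] at hx
        obtain ⟨m, hm⟩ := hx
        rw [LinearMap.mem_ker, hLapp]
        set g : Module.End ℂ (Fin n → ℂ) := φ - μ • 1 with hgdef
        have key : ∀ (m : ℕ) (x : Fin n → ℂ), (g ^ m) x = 0 → v ⬝ᵥ (G *ᵥ x) = 0 := by
          intro m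
          induction m with
          | zero => intro x hx; simp only [pow_zero, Module.End.one_apply] at hx; simp [hx]
          | succ m ih =>
            intro x hx
            have h1 : (g ^ m) (g x) = 0 := by
              rw [← Module.End.mul_apply, ← pow_succ]
              exact hx
            have h2 := ih _ h1
            have h3 : v ⬝ᵥ (G *ᵥ (g x)) = (lam - μ) * (v ⬝ᵥ (G *ᵥ x)) := by
              rw [hgdef]
              simp only [LinearMap.sub_apply, LinearMap.smul_apply, Module.End.one_apply, hφ]
              rw [Matrix.mulVec_sub, Matrix.mulVec_smul, dotProduct_sub,
                dotProduct_smul, smul_eq_mul]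
              have h4 : v ⬝ᵥ (G *ᵥ (A *ᵥ x)) = lam * (v ⬝ᵥ (G *ᵥ x)) := by
                rw [← hadj, heig, smul_dotProduct, smul_eq_mul]
              rw [h4]
              ring
            have h5 : lam - μ ≠ 0 := sub_ne_zero.2 (Ne.symm hμ)
            have h6 : (lam - μ) * (v ⬝ᵥ (G *ᵥ x)) = 0 := by rw [← h3]; exact h2
            rcases mul_eq_zero.1 h6 with h7 | h7
            · exact absurd h7 h5
            · exact h7
        exact key m x hm
    have htot : ∀ w : Fin n → ℂ, L w = 0 := by
      intro w
      have h1 : w ∈ (⊤ : Submodule ℂ (Fin n → ℂ)) := trivial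
      rw [← Module.End.iSup_maxGenEigenspace_eq_top φ] at h1
      have h2 : (⨆ μ : ℂ, φ.maxGenEigenspace μ) ≤ LinearMap.ker L :=
        iSup_le hker
      exact (LinearMap.mem_ker).1 (h2 h1)
    apply hv0
    apply hnondeg
    intro u
    rw [hBsymm]
    exact htot u
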